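/- (Theorem 3) Let y₀ ∈ ℝ, b > 0, ε > 0, and let p : ℝ → ℝ be continuous, strictly positive, strictly decreasing and strictly convex on [y₀, ∞). Suppose the least natural number N with S_l(ε,N) ≥ b exists and equals n₂¹, and let the integer j ≥ 2 satisfy j ≥ 1 + (1/2)·((p(y₀) − p(y₀ + ε·n₂¹ − ε))/p(y₀ + ε·n₂¹)). Then for every x with 0 < x ≤ b the following holds: if m is the least natural number with S_l(ε/j, m) ≥ x, m > j, and Y ≥ y₀ satisfies ∫_{y₀}^{Y} p(y) dy = x, then |Y − (y₀ + (ε/j)·m)| < ε. -/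

import Mathlib

open Set Finset

noncomputable def lowerSum (p : ℝ → ℝ) (y₀ h : ℝ) (N : ℕ) : ℝ :=
  ∑ i ∈ Finset.Icc 1 N, h * p (y₀ + (i : ℝ) * h)

lemma integrable_aux {p : ℝ → ℝ} {y₀ : ℝ} (hc : ContinuousOn p (Set.Ici y₀))
    {a b : ℝ} (ha : y₀ ≤ a) (hab : a ≤ b) :
    IntervalIntegrable p MeasureTheory.volume a b :=
  ContinuousOn.intervalIntegrable_of_Icc hab (hc.mono (fun y hy => le_trans ha hy.1))

lemma rect_bound {p : ℝ → ℝ} {y₀ : ℝ} (hc : ContinuousOn p (Set.Ici y₀))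
    (hanti : AntitoneOn p (Set.Ici y₀)) {t h : ℝ} (ht : y₀ ≤ t) (hh : 0 ≤ h) :
    h * p (t + h) ≤ ∫ y in t..t+h, p y := by
  have h1 : t ≤ t + h := by linarith
  have hmono : ∫ y in t..t+h, p (t+h) ≤ ∫ y in t..t+h, p y :=
    intervalIntegral.integral_mono_on h1 intervalIntegrable_const (integrable_aux hc ht h1)
      (fun y hy => hanti (mem_Ici.mpr (le_trans ht hy.1)) (mem_Ici.mpr (by linarith)) hy.2)
  rw [intervalIntegral.integral_const, smul_eq_mul] at hmono
  have : t + h - t = h := by ring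
  rw [this] at hmono
  exact hmono

lemma chord_bound {p : ℝ → ℝ} {y₀ : ℝ} (hc : ContinuousOn p (Set.Ici y₀))
    (hconv : ConvexOn ℝ (Set.Ici y₀) p) {t h : ℝ} (ht : y₀ ≤ t) (hh : 0 < h) :
    ∫ y in t..t+h, p y ≤ h/2 * (p t + p (t+h)) := by
  have h1 : t ≤ t + h := by linarith
  set q : ℝ → ℝ := fun y => p t + (y - t) * ((p (t+h) - p t)/h) with hq
  have hpq : ∀ y ∈ Set.Icc t (t+h), p y ≤ q y := by
    intro y hy
    obtain ⟨hy1, hy2⟩ := hy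
    set l := (y - t)/h with hl
    have hl0 : 0 ≤ l := div_nonneg (by linarith) hh.le
    have hl1 : l ≤ 1 := by rw [hl, div_le_one hh]; linarith
    have hyy : (1 - l) * t + l * (t+h) = y := by
      have hlh : l * h = y - t := by rw [hl]; exact div_mul_cancel₀ (y - t) hh.ne'
      linear_combination hlh
    have hcv := hconv.2 (mem_Ici.mpr ht) (mem_Ici.mpr (by linarith : y₀ ≤ t + h))
      (by linarith) hl0 (by ring : (1-l) + l = 1)
    rw [smul_eq_mul, smul_eq_mul, smul_eq_mul, smul_eq_mul, hyy] at hcv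
    have : (1-l) * p t + l * p (t+h) = q y := by
      simp only [hq, hl]; field_simp; ring
    linarith [hcv, this.ge]
  have hint1 := integrable_aux hc ht h1
  have hint2 : IntervalIntegrable q MeasureTheory.volume t (t+h) := by
    apply Continuous.intervalIntegrable; fun_prop
  have hmono := intervalIntegral.integral_mono_on h1 hint1 hint2 hpq
  have hidint : ∫ y in t..t+h, (y - t) = h^2/2 := by
    rw [intervalIntegral.integral_comp_sub_right (fun y => y) t]
    rw [integral_id]; ring_nf
  have hqint : ∫ y in t..t+h, q y = h/2 * (p t + p (t+h)) := by
    simp only [hq]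
    rw [intervalIntegral.integral_add intervalIntegrable_const
      (by apply Continuous.intervalIntegrable; fun_prop)]
    rw [intervalIntegral.integral_const, smul_eq_mul,
      intervalIntegral.integral_mul_const, hidint]
    field_simp; ring
  linarith

lemma lowerSum_succ (p : ℝ → ℝ) (y₀ h : ℝ) (N : ℕ) :
    lowerSum p y₀ h (N+1) = lowerSum p y₀ h N + h * p (y₀ + ((N:ℝ)+1) * h) := by
  unfold lowerSum
  rw [Finset.sum_Icc_succ_top (Nat.le_add_left 1 N)]
  norm_num

lemma lowerSum_le_integral {p : ℝ → ℝ} {y₀ : ℝ} (hc : ContinuousOn p (Set.Ici y₀))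
    (hanti : AntitoneOn p (Set.Ici y₀)) {h : ℝ} (hh : 0 < h) (N : ℕ) :
    lowerSum p y₀ h N ≤ ∫ y in y₀..(y₀ + (N:ℝ)*h), p y := by
  induction N with
  | zero => simp [lowerSum]
  | succ N ih =>
      have hN : (0:ℝ) ≤ (N:ℝ) * h := by positivity
      have ht : y₀ ≤ y₀ + (N:ℝ)*h := by linarith
      have hrect := rect_bound hc hanti ht hh.le
      have hsplit := intervalIntegral.integral_add_adjacent_intervals
        (integrable_aux hc le_rfl ht)
        (integrable_aux hc ht (by linarith : y₀ + (N:ℝ)*h ≤ y₀ + (N:ℝ)*h + h))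
      rw [lowerSum_succ]
      have e1 : y₀ + (N:ℝ)*h + h = y₀ + ((N:ℝ)+1)*h := by ring
      have e2 : ((N+1 : ℕ):ℝ) = (N:ℝ)+1 := by push_cast; ring
      rw [e2]
      rw [e1] at hsplit hrect
      linarith [hrect, ih]

lemma integral_le_lowerSum {p : ℝ → ℝ} {y₀ : ℝ} (hc : ContinuousOn p (Set.Ici y₀))
    (hconv : ConvexOn ℝ (Set.Ici y₀) p) {h : ℝ} (hh : 0 < h) (N : ℕ) :
    (∫ y in y₀..(y₀ + (N:ℝ)*h), p y) ≤
      lowerSum p y₀ h N + h/2 * (p y₀ - p (y₀ + (N:ℝ)*h)) := by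
  induction N with
  | zero => simp [lowerSum]
  | succ N ih =>
      have hN : (0:ℝ) ≤ (N:ℝ) * h := by positivity
      have ht : y₀ ≤ y₀ + (N:ℝ)*h := by linarith
      have hch := chord_bound hc hconv ht hh
      have hsplit := intervalIntegral.integral_add_adjacent_intervals
        (integrable_aux hc le_rfl ht)
        (integrable_aux hc ht (by linarith : y₀ + (N:ℝ)*h ≤ y₀ + (N:ℝ)*h + h))
      rw [lowerSum_succ]
      have e1 : y₀ + (N:ℝ)*h + h = y₀ + ((N:ℝ)+1)*h := by ring
      have e2 : ((N+1 : ℕ):ℝ) = (N:ℝ)+1 := by push_cast; ring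
      rw [e2]
      rw [e1] at hsplit hch
      linarith [hch, ih]

lemma lowerSum_mono {p : ℝ → ℝ} {y₀ : ℝ} (hpos : ∀ y ∈ Set.Ici y₀, 0 < p y)
    {h : ℝ} (hh : 0 < h) : Monotone (lowerSum p y₀ h) := by
  intro N M hNM
  apply Finset.sum_le_sum_of_subset_of_nonneg (Finset.Icc_subset_Icc le_rfl hNM)
  intro i _ _
  have h0 : (0:ℝ) ≤ (i:ℝ) * h := mul_nonneg (Nat.cast_nonneg i) hh.le
  exact (mul_pos hh (hpos _ (mem_Ici.mpr (by linarith)))).le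

lemma lowerSum_split (p : ℝ → ℝ) (y₀ h : ℝ) {a b : ℕ} (hab : a ≤ b) :
    lowerSum p y₀ h a + ∑ i ∈ Finset.Ioc a b, h * p (y₀ + (i:ℝ)*h) = lowerSum p y₀ h b := by
  unfold lowerSum
  rw [show Finset.Icc 1 a = Finset.Ioc 0 a from Finset.Icc_add_one_left_eq_Ioc 0 a,
    show Finset.Icc 1 b = Finset.Ioc 0 b from Finset.Icc_add_one_left_eq_Ioc 0 b]
  exact Finset.sum_Ioc_consecutive _ (Nat.zero_le a) hab

lemma lowerSum_succ' (p : ℝ → ℝ) (y₀ h : ℝ) (N : ℕ) :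
    lowerSum p y₀ h (N+1) = lowerSum p y₀ h N + h * p (y₀ + ((N:ℝ)+1) * h) := by
  unfold lowerSum
  rw [Finset.sum_Icc_succ_top (Nat.le_add_left 1 N)]
  norm_num

lemma lowerSum_tail {p : ℝ → ℝ} {y₀ : ℝ} (hanti : AntitoneOn p (Set.Ici y₀))
    {h : ℝ} (hh : 0 < h) {a b : ℕ} (hab : a ≤ b) :
    lowerSum p y₀ h a + ((b:ℝ) - (a:ℝ)) * (h * p (y₀ + (b:ℝ)*h)) ≤ lowerSum p y₀ h b := by
  have hcard : (Finset.Ioc a b).card = b - a := Nat.card_Ioc a b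
  have hterm : ∀ i ∈ Finset.Ioc a b, h * p (y₀ + (b:ℝ)*h) ≤ h * p (y₀ + (i:ℝ)*h) := by
    intro i hi
    rw [Finset.mem_Ioc] at hi
    have hib : (i:ℝ) ≤ (b:ℝ) := by exact_mod_cast hi.2
    have h1 : (0:ℝ) ≤ (i:ℝ)*h := mul_nonneg (Nat.cast_nonneg i) hh.le
    have h2 : (0:ℝ) ≤ (b:ℝ)*h := mul_nonneg (Nat.cast_nonneg b) hh.le
    exact mul_le_mul_of_nonneg_left
      (hanti (mem_Ici.mpr (by linarith)) (mem_Ici.mpr (by linarith))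
        (by nlinarith)) hh.le
  have hsum := Finset.card_nsmul_le_sum (Finset.Ioc a b) _ _ hterm
  rw [hcard, nsmul_eq_mul] at hsum
  have hc : ((b - a : ℕ):ℝ) = (b:ℝ) - (a:ℝ) := by
    rw [Nat.cast_sub hab]
  rw [hc] at hsum
  have := lowerSum_split p y₀ h hab
  linarith

lemma lowerSum_group {p : ℝ → ℝ} {y₀ : ℝ} (hanti : AntitoneOn p (Set.Ici y₀))
    {h : ℝ} (hh : 0 < h) (j : ℕ) (K : ℕ) :
    lowerSum p y₀ ((j:ℝ)*h) K ≤ lowerSum p y₀ h (j*K) := by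
  induction K with
  | zero => simp [lowerSum]
  | succ K ih =>
    have htail := lowerSum_tail hanti hh (show j*K ≤ j*(K+1) by nlinarith)
    have hc : ((j*(K+1) : ℕ):ℝ) = (j:ℝ)*((K:ℝ)+1) := by push_cast; ring
    have hc2 : ((j*K : ℕ):ℝ) = (j:ℝ)*(K:ℝ) := by push_cast; ring
    rw [hc, hc2] at htail
    rw [lowerSum_succ']
    have he : y₀ + ((K:ℝ)+1) * ((j:ℝ)*h) = y₀ + ((j:ℝ)*((K:ℝ)+1))*h := by ring
    rw [he]
    have he2 : ((j:ℝ)*((K:ℝ)+1) - (j:ℝ)*(K:ℝ)) = (j:ℝ) := by ring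
    rw [he2] at htail
    nlinarith [htail, ih]

theorem stmt_16 (y₀ b ε : ℝ) (hb : 0 < b) (hε : 0 < ε)
    (p : ℝ → ℝ)
    (hc : ContinuousOn p (Set.Ici y₀))
    (hpos : ∀ y ∈ Set.Ici y₀, 0 < p y)
    (hanti : StrictAntiOn p (Set.Ici y₀))
    (hconv : StrictConvexOn ℝ (Set.Ici y₀) p)
    (n₂₁ : ℕ) (h₁ : IsLeast {N : ℕ | b ≤ lowerSum p y₀ ε N} n₂₁)
    (j : ℕ) (hj : 2 ≤ j)
    (hcrit : (j : ℝ) ≥ 1 + (1 / 2) *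
      ((p y₀ - p (y₀ + ε * (n₂₁ : ℝ) - ε)) / p (y₀ + ε * (n₂₁ : ℝ)))) :
    ∀ x : ℝ, 0 < x → x ≤ b →
      ∀ m : ℕ, IsLeast {N : ℕ | x ≤ lowerSum p y₀ (ε / (j : ℝ)) N} m → j < m →
        ∀ Y : ℝ, y₀ ≤ Y → (∫ y in y₀..Y, p y) = x →
          |Y - (y₀ + (ε / (j : ℝ)) * (m : ℝ))| < ε := by
  intro x hx hxb m hm hjm Y hY hYint
  have hAnti : AntitoneOn p (Set.Ici y₀) := hanti.antitoneOn
  have hConv : ConvexOn ℝ (Set.Ici y₀) p := hconv.convexOn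
  have hjpos : (0:ℝ) < (j:ℝ) := by exact_mod_cast (show 0 < j by omega)
  set h : ℝ := ε / (j:ℝ) with hh_def
  have hh : 0 < h := div_pos hε hjpos
  have hjh : (j:ℝ) * h = ε := by
    rw [hh_def]; field_simp
  -- n₂₁ ≥ 1
  have hn1 : 1 ≤ n₂₁ := by
    by_contra hcon
    have hz : n₂₁ = 0 := by omega
    have hb1 := h₁.1
    rw [hz] at hb1
    simp [lowerSum] at hb1
    linarith
  -- S_l(h, m-1) < x
  have hltm : lowerSum p y₀ h (m-1) < x := by
    by_contra hcon
    push_neg at hcon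
    have := hm.2 hcon
    omega
  -- m ≤ j * n₂₁
  have hKm : m ≤ j * n₂₁ := by
    by_contra hcon
    push_neg at hcon
    have h1' : j * n₂₁ ≤ m - 1 := by omega
    have hg := lowerSum_group hAnti hh j n₂₁
    rw [hjh] at hg
    have hmono := lowerSum_mono hpos hh h1'
    have hb2 : b ≤ lowerSum p y₀ ε n₂₁ := h₁.1
    linarith [hb2, hg, hmono, hltm, hxb]
  have hmj : j ≤ m := le_of_lt hjm
  have hm1 : 1 ≤ m := by omega
  have hcastj : ((m - j : ℕ):ℝ) = (m:ℝ) - (j:ℝ) := by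
    rw [Nat.cast_sub hmj]
  have hcast1 : ((m - 1 : ℕ):ℝ) = (m:ℝ) - 1 := by
    rw [Nat.cast_sub hm1]; norm_num
  -- mh ≤ ε n₂₁
  have hmh : (m:ℝ) * h ≤ ε * (n₂₁:ℝ) := by
    have : (m:ℝ) ≤ (j:ℝ) * (n₂₁:ℝ) := by exact_mod_cast hKm
    calc (m:ℝ) * h ≤ ((j:ℝ)*(n₂₁:ℝ)) * h := mul_le_mul_of_nonneg_right this hh.le
      _ = ε * (n₂₁:ℝ) := by rw [mul_comm (j:ℝ) _, mul_assoc, hjh]; ring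
  -- upper bound : Y ≤ y₀ + m h
  have h0m : y₀ ≤ y₀ + (m:ℝ)*h := by
    have : (0:ℝ) ≤ (m:ℝ)*h := mul_nonneg (Nat.cast_nonneg m) hh.le
    linarith
  have hup : Y ≤ y₀ + (m:ℝ)*h := by
    by_contra hcon
    push_neg at hcon
    have hxle : x ≤ ∫ y in y₀..(y₀ + (m:ℝ)*h), p y :=
      le_trans hm.1 (lowerSum_le_integral hc hAnti hh m)
    have hpospart : 0 < ∫ y in (y₀ + (m:ℝ)*h)..Y, p y := by
      apply intervalIntegral.intervalIntegral_pos_of_pos_on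
        (integrable_aux hc h0m hcon.le)
        (fun z hz => hpos z (mem_Ici.mpr (le_trans h0m hz.1.le))) hcon
    have hsplit := intervalIntegral.integral_add_adjacent_intervals
      (integrable_aux hc le_rfl h0m) (integrable_aux hc h0m hcon.le)
    rw [hYint] at hsplit
    linarith
  -- lower bound : Y > y₀ + m h - ε
  set c : ℝ := y₀ + ((m - j : ℕ):ℝ) * h with hc_def
  have hcy : y₀ ≤ c := by
    have : (0:ℝ) ≤ ((m-j:ℕ):ℝ)*h := mul_nonneg (Nat.cast_nonneg _) hh.le
    rw [hc_def]; linarith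
  have hcval : c = y₀ + (m:ℝ)*h - ε := by
    rw [hc_def, hcastj, sub_mul, ← hjh]; ring
  -- key : ∫ y₀..c < x
  have hintc : (∫ y in y₀..c, p y) < x := by
    have hIle := integral_le_lowerSum hc hConv hh (m - j)
    have htail := lowerSum_tail hAnti hh (show m - j ≤ m - 1 by omega)
    rw [hcastj, hcast1] at htail
    -- points
    have hm1R : (1:ℝ) ≤ (m:ℝ) := by exact_mod_cast hm1
    have hp1 : y₀ ≤ y₀ + ((m:ℝ)-1)*h := by
      have := mul_nonneg (by linarith : (0:ℝ) ≤ (m:ℝ)-1) hh.le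
      linarith
    have hn1R : (1:ℝ) ≤ (n₂₁:ℝ) := by exact_mod_cast hn1
    have hA0 : y₀ ≤ y₀ + ε*(n₂₁:ℝ) - ε := by
      have := mul_le_mul_of_nonneg_left hn1R hε.le
      linarith
    have hAmem : y₀ ≤ y₀ + ε*(n₂₁:ℝ) := by linarith
    -- p(y₀+(m-1)h) ≥ p(y₀+εn₂₁)
    have hpm1 : p (y₀ + ε*(n₂₁:ℝ)) ≤ p (y₀ + ((m:ℝ)-1)*h) := by
      apply hAnti (mem_Ici.mpr hp1) (mem_Ici.mpr hAmem)
      linarith [hmh, hh.le]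
    -- p c ≥ p(y₀+εn₂₁−ε)
    have hpc : p (y₀ + ε*(n₂₁:ℝ) - ε) ≤ p c := by
      apply hAnti (mem_Ici.mpr hcy) (mem_Ici.mpr hA0)
      rw [hcval]; linarith
    -- hcrit rearranged
    have hpA : 0 < p (y₀ + ε*(n₂₁:ℝ)) := hpos _ (mem_Ici.mpr hAmem)
    have hcrit' : ((j:ℝ) - 1) * p (y₀ + ε*(n₂₁:ℝ)) ≥
        (1/2) * (p y₀ - p (y₀ + ε*(n₂₁:ℝ) - ε)) := by
      have h2 : (j:ℝ) - 1 ≥ (1/2) * ((p y₀ - p (y₀ + ε*(n₂₁:ℝ) - ε)) / p (y₀ + ε*(n₂₁:ℝ))) := by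
        linarith [hcrit]
      calc ((j:ℝ) - 1) * p (y₀ + ε*(n₂₁:ℝ))
          ≥ ((1/2) * ((p y₀ - p (y₀ + ε*(n₂₁:ℝ) - ε)) / p (y₀ + ε*(n₂₁:ℝ)))) * p (y₀ + ε*(n₂₁:ℝ)) :=
            mul_le_mul_of_nonneg_right h2 hpA.le
        _ = (1/2) * (p y₀ - p (y₀ + ε*(n₂₁:ℝ) - ε)) := by field_simp
    -- combine
    have hkey : ((j:ℝ) - 1) * p (y₀ + ((m:ℝ)-1)*h) ≥ (1/2) * (p y₀ - p c) := by
      have hj1 : (1:ℝ) ≤ (j:ℝ) := by exact_mod_cast (show 1 ≤ j by omega)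
      nlinarith [hpm1, hpc, hcrit', hpA]
    rw [hcastj] at hIle
    -- hIle : ∫ y₀..(y₀+((m)-(j))*h) ≤ lowerSum (m-j) + h/2 (p y₀ - p (y₀+((m)-(j))h))
    have hcc : y₀ + ((m:ℝ)-(j:ℝ))*h = c := by rw [hc_def, hcastj]
    rw [hcc] at hIle
    -- htail : lowerSum (m-j) + ((m-1)-(m-j))*(h * p(y₀+((m)-1)h)) ≤ lowerSum (m-1)
    have he : ((m:ℝ)-1) - ((m:ℝ)-(j:ℝ)) = (j:ℝ) - 1 := by ring
    rw [he] at htail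
    have hprod := mul_le_mul_of_nonneg_left hkey hh.le
    linarith [hIle, htail, hltm, hprod]
  have hlow : c < Y := by
    by_contra hcon
    push_neg at hcon
    have hsplit := intervalIntegral.integral_add_adjacent_intervals
      (integrable_aux hc le_rfl hY) (integrable_aux hc hY hcon)
    have hnn : 0 ≤ ∫ y in Y..c, p y :=
      intervalIntegral.integral_nonneg hcon
        (fun u hu => (hpos u (mem_Ici.mpr (le_trans hY hu.1))).le)
    rw [hYint] at hsplit
    linarith
  rw [abs_lt]
  constructor
  · rw [hcval] at hlow
    have : h * (m:ℝ) = (m:ℝ) * h := mul_comm _ _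
    rw [this]; linarith
  · have : h * (m:ℝ) = (m:ℝ) * h := mul_comm _ _
    rw [this]; linarith
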